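/- Let n ≥ 1 be an integer and let χ, ψ : (0,π) → ℝ be differentiable functions satisfying the coupled system χ′(θ) = −(n+1)·(cos θ / sin θ)·χ(θ) + (1/sin θ)·ψ(θ) and ψ′(θ) = −(n+1)·(cos θ / sin θ)·ψ(θ) + (1/sin θ)·χ(θ) for all θ ∈ (0,π). If (χ,ψ) is not identically zero, then for every ε > 0 there exist δ ∈ (0,π) and C > 0 such that χ(θ)² + ψ(θ)² ≥ C·sin(θ)^{−2(n−1−ε)} for all θ ∈ (π−δ, π). -/

import Mathlib

open Real

open Set in

lemma aux_pos (F D : ℝ → ℝ) (L : ℝ)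
    (hF : ∀ θ ∈ Set.Ioo (0:ℝ) π, HasDerivAt F (D θ) θ)
    (hFnn : ∀ θ, 0 ≤ F θ)
    (hDb : ∀ θ ∈ Set.Ioo (0:ℝ) π, |D θ| * sin θ ≤ L * F θ)
    (a b : ℝ) (ha : a ∈ Set.Ioo (0:ℝ) π) (hb : b ∈ Set.Ioo (0:ℝ) π) (hab : a ≤ b)
    (hFa : 0 < F a) : 0 < F b := by
  by_contra h
  have hFb : F b = 0 := le_antisymm (le_of_not_gt h) (hFnn b)
  have hsub : Icc a b ⊆ Ioo 0 π := fun x hx => ⟨lt_of_lt_of_le ha.1 hx.1, lt_of_le_of_lt hx.2 hb.2⟩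
  obtain ⟨z, hz, hzmin⟩ := isCompact_Icc.exists_isMinOn (nonempty_Icc.mpr hab)
    (continuous_sin.continuousOn (s := Icc a b))
  set m := sin z with hmdef
  have hm : 0 < m := sin_pos_of_pos_of_lt_pi (hsub hz).1 (hsub hz).2
  set K := L / m with hK
  set f : ℝ → ℝ := fun t => F (a + b - t) with hf
  set f' : ℝ → ℝ := fun t => -D (a + b - t) with hf'
  have hmem : ∀ t ∈ Icc a b, a + b - t ∈ Icc a b := by
    intro t ht
    exact ⟨by linarith [ht.2], by linarith [ht.1]⟩
  have hder : ∀ t ∈ Icc a b, HasDerivAt f (f' t) t := by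
    intro t ht
    have h1 : HasDerivAt (fun y : ℝ => a + b - y) (-1) t := (hasDerivAt_id t).const_sub (a + b)
    have h2 := (hF _ (hsub (hmem t ht))).comp t h1
    exact h2.congr_deriv (by simp [hf'])
  have hfc : ContinuousOn f (Icc a b) := fun t ht => (hder t ht).continuousAt.continuousWithinAt
  have hfd : ∀ t ∈ Ico a b, HasDerivWithinAt f (f' t) (Ici t) t :=
    fun t ht => (hder t (Ico_subset_Icc_self ht)).hasDerivWithinAt
  have ha0 : ‖f a‖ ≤ (0:ℝ) := by
    have : a + b - a = b := by ring
    simp [hf, this, hFb]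
  have bound : ∀ t ∈ Ico a b, ‖f' t‖ ≤ K * ‖f t‖ + 0 := by
    intro t ht
    have hθ : a + b - t ∈ Icc a b := hmem t (Ico_subset_Icc_self ht)
    have hsθ : 0 < sin (a + b - t) :=
      sin_pos_of_pos_of_lt_pi (hsub hθ).1 (hsub hθ).2
    have hmin : m ≤ sin (a + b - t) := hzmin hθ
    have hDθ := hDb _ (hsub hθ)
    have h1 : |D (a + b - t)| * m ≤ L * F (a + b - t) :=
      le_trans (mul_le_mul_of_nonneg_left hmin (abs_nonneg _)) hDθ
    have hL' : 0 ≤ L * F (a + b - t) :=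
      le_trans (mul_nonneg (abs_nonneg _) hm.le) h1
    rw [hf, hf', Real.norm_eq_abs, Real.norm_eq_abs, abs_neg, abs_of_nonneg (hFnn _), add_zero]
    rw [hK, div_mul_eq_mul_div, le_div_iff₀ hm]
    exact h1
  have hg := norm_le_gronwallBound_of_norm_deriv_right_le hfc hfd ha0 bound b
    (right_mem_Icc.mpr hab)
  rw [gronwallBound_ε0_δ0] at hg
  have hfb : f b = F a := by
    have : a + b - b = a := by ring
    simp [hf, this]
  rw [Real.norm_eq_abs, hfb, abs_of_nonneg (hFnn a)] at hg
  linarith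

/-- Energy lower bound near `θ = π` for nontrivial solutions of the coupled ODE system
`χ' = -(n+1)(cos/sin)χ + ψ/sin`, `ψ' = -(n+1)(cos/sin)ψ + χ/sin` on `(0,π)`:
for every `ε > 0` there are `δ ∈ (0,π)` and `C > 0` with
`χ² + ψ² ≥ C·sin^{-2(n-1-ε)}` on `(π-δ, π)`. -/
theorem energy_lower_bound (n : ℕ) (hn : 1 ≤ n) (χ ψ : ℝ → ℝ)
    (hχ : ∀ θ ∈ Set.Ioo (0 : ℝ) π, HasDerivAt χ
        (-((n : ℝ) + 1) * (cos θ / sin θ) * χ θ + ψ θ / sin θ) θ)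
    (hψ : ∀ θ ∈ Set.Ioo (0 : ℝ) π, HasDerivAt ψ
        (-((n : ℝ) + 1) * (cos θ / sin θ) * ψ θ + χ θ / sin θ) θ)
    (hnontriv : ∃ θ ∈ Set.Ioo (0 : ℝ) π, χ θ ≠ 0 ∨ ψ θ ≠ 0) :
    ∀ ε : ℝ, 0 < ε → ∃ δ : ℝ, 0 < δ ∧ δ < π ∧ ∃ C : ℝ, 0 < C ∧
      ∀ θ ∈ Set.Ioo (π - δ) π,
        C * sin θ ^ (-(2 * ((n : ℝ) - 1 - ε))) ≤ χ θ ^ 2 + ψ θ ^ 2 := by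
  intro ε hε
  obtain ⟨θs, hθs, hnz⟩ := hnontriv
  set F : ℝ → ℝ := fun t => χ t ^ 2 + ψ t ^ 2 with hFdef
  set D : ℝ → ℝ := fun t => 2 * χ t * (-((n : ℝ) + 1) * (cos t / sin t) * χ t + ψ t / sin t)
    + 2 * ψ t * (-((n : ℝ) + 1) * (cos t / sin t) * ψ t + χ t / sin t) with hDdef
  have hFnn : ∀ t, 0 ≤ F t := fun t => by positivity
  have hF : ∀ θ ∈ Set.Ioo (0:ℝ) π, HasDerivAt F (D θ) θ := by
    intro θ hθ
    have h := ((hχ θ hθ).pow 2).add ((hψ θ hθ).pow 2)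
    convert h using 1
    · rfl
    · rfl
    · rfl
    simp only [hDdef]
    push_cast
    ring
  -- the key algebraic identity for D * sin
  have hDs : ∀ θ ∈ Set.Ioo (0:ℝ) π, D θ * sin θ =
      -2 * ((n:ℝ) + 1) * cos θ * F θ + 4 * (χ θ * ψ θ) := by
    intro θ hθ
    have hs : 0 < sin θ := sin_pos_of_pos_of_lt_pi hθ.1 hθ.2
    simp only [hDdef, hFdef]
    field_simp
    ring
  -- pointwise bound used for Gronwall
  have hDb : ∀ θ ∈ Set.Ioo (0:ℝ) π, |D θ| * sin θ ≤ (2*(n:ℝ)+4) * F θ := by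
    intro θ hθ
    have hs : 0 < sin θ := sin_pos_of_pos_of_lt_pi hθ.1 hθ.2
    have h1 := hDs θ hθ
    have h1pc : (0:ℝ) ≤ 1 + cos θ := by linarith [neg_one_le_cos θ]
    have h1mc : (0:ℝ) ≤ 1 - cos θ := by linarith [cos_le_one θ]
    have hFθ : F θ = χ θ ^ 2 + ψ θ ^ 2 := rfl
    rw [← abs_of_nonneg hs.le, ← abs_mul]
    rw [abs_le]
    constructor
    · nlinarith [hFθ, sq_nonneg (χ θ + ψ θ), mul_nonneg (mul_nonneg
        (by positivity : (0:ℝ) ≤ 2*((n:ℝ)+1)) (hFnn θ)) h1mc]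
    · nlinarith [hFθ, sq_nonneg (χ θ - ψ θ), mul_nonneg (mul_nonneg
        (by positivity : (0:ℝ) ≤ 2*((n:ℝ)+1)) (hFnn θ)) h1pc]
  have key : ∀ a b : ℝ, a ∈ Set.Ioo (0:ℝ) π → b ∈ Set.Ioo (0:ℝ) π → a ≤ b →
      0 < F a → 0 < F b := fun a b ha hb hab hFa =>
    aux_pos F D (2*(n:ℝ)+4) hF hFnn hDb a b ha hb hab hFa
  -- the threshold angle
  have h2ε : (0:ℝ) < 2 + ε := by linarith
  set x₀ : ℝ := -(1/(2+ε)) with hx₀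
  have hx₀1 : -1 < x₀ := by
    rw [hx₀, neg_lt, neg_neg]
    rw [div_lt_iff₀ h2ε]
    linarith
  have hx₀2 : x₀ < 1 := by
    have : (0:ℝ) < 1/(2+ε) := by positivity
    rw [hx₀]; linarith
  set a₀ : ℝ := arccos x₀ with ha₀
  have ha₀0 : 0 < a₀ := arccos_pos.mpr hx₀2
  have ha₀π : a₀ < π := lt_of_le_of_ne (arccos_le_pi x₀)
    (by rw [ne_eq, arccos_eq_pi]; linarith)
  have hcosa₀ : cos a₀ = x₀ := cos_arccos hx₀1.le hx₀2.le
  -- base point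
  set θ₀ : ℝ := max θs a₀ with hθ₀
  have hθ₀mem : θ₀ ∈ Set.Ioo (0:ℝ) π := ⟨lt_of_lt_of_le hθs.1 (le_max_left _ _),
    max_lt hθs.2 ha₀π⟩
  have hFθs : 0 < F θs := by
    rcases hnz with h | h
    · have := pow_two_pos_of_ne_zero h
      have := sq_nonneg (ψ θs)
      simp only [hFdef]; nlinarith
    · have := pow_two_pos_of_ne_zero h
      have := sq_nonneg (χ θs)
      simp only [hFdef]; nlinarith
  have hFθ₀ : 0 < F θ₀ := key θs θ₀ hθs hθ₀mem (le_max_left _ _) hFθs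
  have hsθ₀ : 0 < sin θ₀ := sin_pos_of_pos_of_lt_pi hθ₀mem.1 hθ₀mem.2
  set k : ℝ := 2 * ((n:ℝ) - 1 - ε) with hk
  refine ⟨π - θ₀, by linarith [hθ₀mem.2], by linarith [hθ₀mem.1], F θ₀ * sin θ₀ ^ k,
    by positivity, ?_⟩
  intro θ hθ
  rw [sub_sub_cancel] at hθ
  -- hθ : θ ∈ Ioo θ₀ π
  have hθmem : θ ∈ Set.Ioo (0:ℝ) π := ⟨lt_trans hθ₀mem.1 hθ.1, hθ.2⟩
  have hsθ : 0 < sin θ := sin_pos_of_pos_of_lt_pi hθmem.1 hθmem.2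
  -- G := F * sin^k is monotone on [θ₀, θ]
  set G : ℝ → ℝ := fun t => F t * sin t ^ k with hG
  set G' : ℝ → ℝ := fun t => D t * sin t ^ k + F t * (cos t * k * sin t ^ (k - 1)) with hG'
  have hsubI : Set.Icc θ₀ θ ⊆ Set.Ioo 0 π :=
    fun x hx => ⟨lt_of_lt_of_le hθ₀mem.1 hx.1, lt_of_le_of_lt hx.2 hθ.2⟩
  have hGd : ∀ x ∈ Set.Icc θ₀ θ, HasDerivAt G (G' x) x := by
    intro x hx
    have hsx : 0 < sin x := sin_pos_of_pos_of_lt_pi (hsubI hx).1 (hsubI hx).2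
    exact (hF x (hsubI hx)).mul ((Real.hasDerivAt_sin x).rpow_const (Or.inl hsx.ne'))
  have hGderiv : ∀ x ∈ Set.Ioo θ₀ θ, 0 ≤ deriv G x := by
    intro x hx
    have hx' : x ∈ Set.Icc θ₀ θ := ⟨hx.1.le, hx.2.le⟩
    have hxm := hsubI hx'
    have hsx : 0 < sin x := sin_pos_of_pos_of_lt_pi hxm.1 hxm.2
    rw [(hGd x hx').deriv]
    -- cos x ≤ x₀
    have hcx : cos x ≤ x₀ := by
      rw [← hcosa₀]
      have ha₀x : a₀ < x := lt_of_le_of_lt (le_max_right θs a₀) hx.1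
      exact (Real.strictAntiOn_cos ⟨arccos_nonneg _, arccos_le_pi _⟩
        ⟨hxm.1.le, hxm.2.le⟩ ha₀x).le
    have hc' : (2+ε) * cos x ≤ -1 := by
      have := mul_le_mul_of_nonneg_left hcx h2ε.le
      rw [hx₀] at this
      calc (2+ε) * cos x ≤ (2+ε) * -(1/(2+ε)) := this
        _ = -1 := by field_simp
    -- the core inequality: 0 ≤ D x * sin x + k * (cos x * F x)
    have hFx : F x = χ x ^ 2 + ψ x ^ 2 := rfl
    have hcore : 0 ≤ D x * sin x + (2 * ((n:ℝ) - 1 - ε)) * (cos x * F x) := by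
      have h1 := hDs x hxm
      have h2 : (2+ε) * cos x * F x ≤ -1 * F x :=
        mul_le_mul_of_nonneg_right hc' (hFnn x)
      nlinarith [h1, h2, sq_nonneg (χ x + ψ x), hFx]
    have heq : G' x = (sin x ^ k / sin x) * (D x * sin x + k * (cos x * F x)) := by
      show D x * sin x ^ k + F x * (cos x * k * sin x ^ (k - 1)) = _
      have hr : sin x ^ (k - 1) = sin x ^ k / sin x := by
        rw [Real.rpow_sub hsx, Real.rpow_one]
      rw [hr]
      field_simp
    rw [heq, hk]
    have hpos : 0 ≤ sin x ^ k / sin x := by positivity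
    exact mul_nonneg (by rw [hk] at hpos; exact hpos) hcore
  have hmono : MonotoneOn G (Set.Icc θ₀ θ) := by
    apply monotoneOn_of_deriv_nonneg (convex_Icc θ₀ θ)
    · exact fun x hx => (hGd x hx).continuousAt.continuousWithinAt
    · intro x hx
      rw [interior_Icc] at hx
      exact ((hGd x ⟨hx.1.le, hx.2.le⟩).differentiableAt).differentiableWithinAt
    · intro x hx
      rw [interior_Icc] at hx
      exact hGderiv x hx
  have hGle : G θ₀ ≤ G θ := hmono ⟨le_rfl, hθ.1.le⟩ ⟨hθ.1.le, le_rfl⟩ hθ.1.le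
  -- conclude
  have hkneg : -(2 * ((n:ℝ) - 1 - ε)) = -k := by rw [hk]
  rw [hkneg]
  have hrp : (0:ℝ) < sin θ ^ (-k) := Real.rpow_pos_of_pos hsθ _
  have := mul_le_mul_of_nonneg_right hGle hrp.le
  calc F θ₀ * sin θ₀ ^ k * sin θ ^ (-k) ≤ (F θ * sin θ ^ k) * sin θ ^ (-k) := this
    _ = F θ * (sin θ ^ k * sin θ ^ (-k)) := by ring
    _ = F θ := by
        rw [← Real.rpow_add hsθ, add_neg_cancel, Real.rpow_zero, mul_one]
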